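/- arXiv:1603.03456 — 2 statements merged into one kernel-verified Lean document; each statement's English description precedes it below -/
import Mathlib

section
/- Let G be a group, H ≤ G a subgroup of finite index, V a finite-dimensional complex vector space with a representation ρ : H → GL(V), and g ∈ G. Suppose there exists an integer k ≥ 1 such that for every x ∈ G and every integer m ≥ 1 with x⁻¹ g^m x ∈ H, one has ρ(x⁻¹ g^m x)^k = 1. Then the linear action of g on the induced representation Ind_H^G V = ℂ[G] ⊗_{ℂ[H]} V has finite order, i.e., there exists N ≥ 1 such that g^N acts as the identity on ℂ[G] ⊗_{ℂ[H]} V. -/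
open TensorProduct

/-- The submodule of `ℂ[G] ⊗[ℂ] V` spanned by the balancing relations
`(a * h) ⊗ v - a ⊗ (ρ h v)` for `a ∈ ℂ[G]`, `h ∈ H`, `v ∈ V`.  The quotient by this
submodule is the induced representation `Ind_H^G V = ℂ[G] ⊗_{ℂ[H]} V`. -/
noncomputable def indRel (G : Type*) [Group G] (H : Subgroup G)
    (V : Type*) [AddCommGroup V] [Module ℂ V] (ρ : Representation ℂ H V) :
    Submodule ℂ (MonoidAlgebra ℂ G ⊗[ℂ] V) :=
  Submodule.span ℂ { x | ∃ (a : MonoidAlgebra ℂ G) (h : H) (v : V),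
    x = (a * MonoidAlgebra.of ℂ G (h : G)) ⊗ₜ[ℂ] v - a ⊗ₜ[ℂ] (ρ h v) }

/-- The (ℂ-linear) action of `g ∈ G` on `ℂ[G] ⊗[ℂ] V`, by left multiplication on the first
tensor factor; it descends to the action of `g` on the induced representation
`ℂ[G] ⊗_{ℂ[H]} V`. -/
noncomputable def indAct (G : Type*) [Group G]
    (V : Type*) [AddCommGroup V] [Module ℂ V] (g : G) :
    MonoidAlgebra ℂ G ⊗[ℂ] V →ₗ[ℂ] MonoidAlgebra ℂ G ⊗[ℂ] V :=
  TensorProduct.map (LinearMap.mulLeft ℂ (MonoidAlgebra.of ℂ G g)) LinearMap.id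

/-- Let `H ≤ G` be a subgroup of finite index, `V` a finite dimensional complex representation
of `H`, and `g ∈ G`.  If there is `k ≥ 1` such that every conjugate power `x⁻¹ g^m x` (`m ≥ 1`)
of `g` which lies in `H` satisfies `ρ(x⁻¹ g^m x)^k = 1`, then `g` acts with finite order on the
induced representation `Ind_H^G V = ℂ[G] ⊗_{ℂ[H]} V`: there is `N ≥ 1` such that `g ^ N` acts
as the identity on `ℂ[G] ⊗_{ℂ[H]} V`. -/
theorem induced_rep_finite_order_of_conjugates_bounded_order
    (G : Type*) [Group G] (H : Subgroup G) [H.FiniteIndex]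
    (V : Type*) [AddCommGroup V] [Module ℂ V] [FiniteDimensional ℂ V]
    (ρ : Representation ℂ H V) (g : G) (k : ℕ) (hk : 1 ≤ k)
    (hconj : ∀ (x : G) (m : ℕ), 1 ≤ m → ∀ hx : x⁻¹ * g ^ m * x ∈ H,
      ρ ⟨x⁻¹ * g ^ m * x, hx⟩ ^ k = 1) :
    ∃ N : ℕ, 1 ≤ N ∧
      ∀ x : MonoidAlgebra ℂ G ⊗[ℂ] V,
        (Submodule.Quotient.mk (indAct G V (g ^ N) x) :
            (MonoidAlgebra ℂ G ⊗[ℂ] V) ⧸ indRel G H V ρ) =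
          Submodule.Quotient.mk x := by
  classical
  obtain ⟨m, hm1, hmH⟩ : ∃ m : ℕ, 1 ≤ m ∧ ∀ x : G, x⁻¹ * g ^ m * x ∈ H := by
    have hfin : Finite (G ⧸ H) := Subgroup.finite_quotient_of_finiteIndex (H := H)
    set σ : Equiv.Perm (G ⧸ H) := MulAction.toPermHom G (G ⧸ H) g with hσ
    refine ⟨orderOf σ, orderOf_pos σ, fun x => ?_⟩
    have h1 : σ ^ orderOf σ = 1 := pow_orderOf_eq_one σ
    have h2 : ∀ q : G ⧸ H, (g ^ orderOf σ) • q = q := by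
      intro q
      have hmap : MulAction.toPermHom G (G ⧸ H) (g ^ orderOf σ) = 1 := by
        rw [map_pow, ← hσ, h1]
      simpa using Equiv.Perm.ext_iff.mp hmap q
    have h3 : ((g ^ orderOf σ * x : G) : G ⧸ H) = ↑x := by
      simpa using h2 ↑x
    have := QuotientGroup.eq.mp h3.symm
    simpa [mul_assoc] using this
  set N := m * k with hN
  have key : ∀ (y : G) (v : V),
      (MonoidAlgebra.of ℂ G (g ^ N) * MonoidAlgebra.of ℂ G y) ⊗ₜ[ℂ] v
        - MonoidAlgebra.of ℂ G y ⊗ₜ[ℂ] v ∈ indRel G H V ρ := by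
    intro y v
    have hconjpow : (y⁻¹ * g ^ m * y) ^ k = y⁻¹ * g ^ N * y := by
      have h := conj_pow (i := k) (a := y⁻¹) (b := g ^ m)
      simp only [inv_inv] at h
      rw [h, ← pow_mul, hN]
    have hyH : y⁻¹ * g ^ N * y ∈ H := hconjpow ▸ pow_mem (hmH y) k
    set h : H := ⟨y⁻¹ * g ^ N * y, hyH⟩ with hh
    have hρ : ρ h = 1 := by
      have hpow : h = (⟨y⁻¹ * g ^ m * y, hmH y⟩ : H) ^ k := by
        ext
        push_cast
        rw [hconjpow]
      rw [hpow, map_pow, hconj y m hm1 (hmH y)]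
    have hmul : MonoidAlgebra.of ℂ G y * MonoidAlgebra.of ℂ G (h : G)
        = MonoidAlgebra.of ℂ G (g ^ N) * MonoidAlgebra.of ℂ G y := by
      rw [← map_mul, ← map_mul, hh]
      congr 1
      group
    have hmem : (MonoidAlgebra.of ℂ G y * MonoidAlgebra.of ℂ G (h : G)) ⊗ₜ[ℂ] v
        - MonoidAlgebra.of ℂ G y ⊗ₜ[ℂ] (ρ h v) ∈ indRel G H V ρ :=
      Submodule.subset_span ⟨MonoidAlgebra.of ℂ G y, h, v, rfl⟩
    rw [hmul, hρ] at hmem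
    simpa using hmem
  have main : ∀ (a : MonoidAlgebra ℂ G) (v : V),
      (MonoidAlgebra.of ℂ G (g ^ N) * a) ⊗ₜ[ℂ] v - a ⊗ₜ[ℂ] v ∈ indRel G H V ρ := by
    intro a v
    induction a using MonoidAlgebra.induction_on with
    | of y => exact key y v
    | add f₁ f₂ h₁ h₂ =>
        have he : (MonoidAlgebra.of ℂ G (g ^ N) * (f₁ + f₂)) ⊗ₜ[ℂ] v - (f₁ + f₂) ⊗ₜ[ℂ] v
            = ((MonoidAlgebra.of ℂ G (g ^ N) * f₁) ⊗ₜ[ℂ] v - f₁ ⊗ₜ[ℂ] v)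
              + ((MonoidAlgebra.of ℂ G (g ^ N) * f₂) ⊗ₜ[ℂ] v - f₂ ⊗ₜ[ℂ] v) := by
          rw [mul_add, TensorProduct.add_tmul, TensorProduct.add_tmul]
          abel
        rw [he]
        exact Submodule.add_mem _ h₁ h₂
    | smul c f hf =>
        have he : (MonoidAlgebra.of ℂ G (g ^ N) * (c • f)) ⊗ₜ[ℂ] v - (c • f) ⊗ₜ[ℂ] v
            = c • ((MonoidAlgebra.of ℂ G (g ^ N) * f) ⊗ₜ[ℂ] v - f ⊗ₜ[ℂ] v) := by
          rw [mul_smul_comm, smul_sub, TensorProduct.smul_tmul', TensorProduct.smul_tmul']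
        rw [he]
        exact Submodule.smul_mem _ _ hf
  refine ⟨N, le_trans hm1 (Nat.le_mul_of_pos_right m hk), fun x => ?_⟩
  rw [Submodule.Quotient.eq]
  induction x using TensorProduct.induction_on with
  | zero => simp
  | tmul a v =>
      have he : indAct G V (g ^ N) (a ⊗ₜ[ℂ] v) - a ⊗ₜ[ℂ] v
          = (MonoidAlgebra.of ℂ G (g ^ N) * a) ⊗ₜ[ℂ] v - a ⊗ₜ[ℂ] v := by
        simp [indAct]
      rw [he]
      exact main a v
  | add p q hp hq =>
      have he : indAct G V (g ^ N) (p + q) - (p + q)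
          = (indAct G V (g ^ N) p - p) + (indAct G V (g ^ N) q - q) := by
        rw [map_add]; abel
      rw [he]
      exact Submodule.add_mem _ hp hq
end

section
/- For every g ≥ 1, the genus-g surface group π₁(S_g) is torsion-free: if γ ∈ π₁(S_g) satisfies γ^n = 1 for some integer n ≥ 1, then γ = 1. -/
/-- The standard surface relator `[a₁,b₁]⋯[a_g,b_g]` in the free group on the `2g`
generators `aᵢ = (i, false)` and `bᵢ = (i, true)`. -/
def surfaceRelator (g : ℕ) : FreeGroup (Fin g × Bool) :=
  (List.ofFn (fun i : Fin g =>
    FreeGroup.of (i, false) * FreeGroup.of (i, true) *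
      (FreeGroup.of (i, false))⁻¹ * (FreeGroup.of (i, true))⁻¹)).prod

/-- The genus-`g` surface group
`π₁(S_g) = ⟨a₁, b₁, …, a_g, b_g ∣ [a₁,b₁]⋯[a_g,b_g]⟩`. -/
abbrev SurfaceGroup (g : ℕ) : Type :=
  PresentedGroup ({surfaceRelator g} : Set (FreeGroup (Fin g × Bool)))


theorem freeGroup_eq_one_of_pow_eq_one {β : Type*} (x : FreeGroup β) (n : ℕ) (hn : 1 ≤ n)
    (hx : x ^ n = 1) : x = 1 := by
  by_contra hx1
  have hfin : IsOfFinOrder x := isOfFinOrder_iff_pow_eq_one.2 ⟨n, hn, hx⟩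
  have hfinite : (Subgroup.zpowers x : Set (FreeGroup β)).Finite := hfin.finite_zpowers
  haveI : Finite (Subgroup.zpowers x) := hfinite.to_subtype
  haveI : IsFreeGroup (Subgroup.zpowers x) := subgroupIsFreeOfIsFree _
  have hnontriv : Nontrivial (Subgroup.zpowers x) :=
    ⟨⟨⟨x, Subgroup.mem_zpowers x⟩, 1, by simp [Subtype.ext_iff, hx1]⟩⟩
  -- derive contradiction
  rcases isEmpty_or_nonempty (IsFreeGroup.Generators (Subgroup.zpowers x)) with he | hne
  · -- free group on empty type is trivial
    have e := IsFreeGroup.toFreeGroup (Subgroup.zpowers x)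
    have : Subsingleton (FreeGroup (IsFreeGroup.Generators (Subgroup.zpowers x))) := by
      constructor
      intro a b
      have ha := FreeGroup.toWord_injective (α := IsFreeGroup.Generators (Subgroup.zpowers x))
      apply ha
      cases h1 : a.toWord with
      | nil => cases h2 : b.toWord with
        | nil => rfl
        | cons c l => exact (he.false c.1).elim
      | cons c l => exact (he.false c.1).elim
    have : Subsingleton (Subgroup.zpowers x) := e.toEquiv.subsingleton
    exact (not_subsingleton_iff_nontrivial.2 hnontriv) this
  · -- free group on nonempty type is infinite
    obtain ⟨b⟩ := hne
    have hsurj : Function.Surjective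
        (FreeGroup.lift (fun _ : IsFreeGroup.Generators (Subgroup.zpowers x) =>
          Multiplicative.ofAdd (1 : ℤ))) := by
      intro m
      refine ⟨(FreeGroup.of b) ^ (Multiplicative.toAdd m), ?_⟩
      rw [map_zpow, FreeGroup.lift_apply_of]
      simp [← ofAdd_zsmul]
    have : Infinite (FreeGroup (IsFreeGroup.Generators (Subgroup.zpowers x))) :=
      Infinite.of_surjective _ hsurj
    have e := IsFreeGroup.toFreeGroup (Subgroup.zpowers x)
    have : Infinite (Subgroup.zpowers x) := Infinite.of_surjective (⇑e) e.surjective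
    exact (not_finite (Subgroup.zpowers x))


open HNNExtension HNNExtension.NormalWord

namespace HNNTorsion

variable {G : Type*} [Group G] {A B : Subgroup G} (φ : A ≃* B)

/-- The product of a list of pairs `(u, g)` as `∏ t^u * of g` in the HNN extension. -/
def wp (l : List (ℤˣ × G)) : HNNExtension G A B φ :=
  (l.map fun p => (t : HNNExtension G A B φ) ^ (p.1 : ℤ) * of p.2).prod

lemma wp_nil : wp φ ([] : List (ℤˣ × G)) = 1 := rfl

lemma wp_append (l₁ l₂ : List (ℤˣ × G)) : wp φ (l₁ ++ l₂) = wp φ l₁ * wp φ l₂ := by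
  simp [wp]

lemma wp_cons (p : ℤˣ × G) (l : List (ℤˣ × G)) :
    wp φ (p :: l) = (t : HNNExtension G A B φ) ^ (p.1 : ℤ) * of p.2 * wp φ l := by
  simp [wp]

lemma wp_concat (l : List (ℤˣ × G)) (p : ℤˣ × G) :
    wp φ (l ++ [p]) = wp φ l * ((t : HNNExtension G A B φ) ^ (p.1 : ℤ) * of p.2) := by
  simp [wp]

lemma rw_prod_eq (w : ReducedWord G A B) :
    w.prod φ = of w.head * wp φ w.toList := rfl

/-- The chain condition for reduced words. -/
def C (A B : Subgroup G) (a b : ℤˣ × G) : Prop := a.2 ∈ toSubgroup A B a.1 → a.1 = b.1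

lemma units_eq_of_ne_neg {u v : ℤˣ} (h : u ≠ -v) : u = v := by
  rcases Int.units_eq_one_or u with rfl | rfl <;> rcases Int.units_eq_one_or v with rfl | rfl <;>
    simp_all

lemma t_conj (u : ℤˣ) (a : G) (ha : a ∈ toSubgroup A B u) :
    (t : HNNExtension G A B φ) ^ (u : ℤ) * of a * t ^ (-(u : ℤ)) =
      of ((toSubgroupEquiv φ u ⟨a, ha⟩ : toSubgroup A B (-u)) : G) := by
  rcases Int.units_eq_one_or u with rfl | rfl
  · simp; exact (equiv_eq_conj (φ := φ) ⟨a, ha⟩).symm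
  · simp; exact (equiv_symm_eq_conj (φ := φ) ⟨a, ha⟩).symm

lemma seam_reduce (u : ℤˣ) (a c : G) (ha : a ∈ toSubgroup A B u) :
    (t : HNNExtension G A B φ) ^ (u : ℤ) * of a * ((t : HNNExtension G A B φ) ^ (-(u : ℤ)) * of c)
      = of (((toSubgroupEquiv φ u ⟨a, ha⟩ : toSubgroup A B (-u)) : G) * c) := by
  rw [map_mul, ← t_conj φ u a ha]; group

lemma chain_join (M : List (ℤˣ × G)) (hM : M.Chain' (C A B)) (hne : M ≠ [])
    (hseam : ∀ a ∈ M.getLast?, ∀ b ∈ M.head?, C A B a b) :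
    ∀ n : ℕ, ((List.replicate n M).flatten).Chain' (C A B)
  | 0 => List.isChain_nil
  | (n+1) => by
    rw [List.replicate_succ, List.flatten_cons]
    refine List.isChain_append.2 ⟨hM, chain_join M hM hne hseam n, ?_⟩
    intro x hx y hy
    cases n with
    | zero => simp at hy
    | succ m =>
      rw [List.replicate_succ, List.flatten_cons, List.head?_append_of_ne_nil _ hne] at hy
      exact hseam x hx y hy

lemma wp_flatten (M : List (ℤˣ × G)) :
    ∀ n : ℕ, wp φ ((List.replicate n M).flatten) = (wp φ M) ^ n
  | 0 => by simp [wp_nil]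
  | (n+1) => by
    rw [List.replicate_succ, List.flatten_cons, wp_append, wp_flatten M n, pow_succ']

lemma britton_contradiction (M : List (ℤˣ × G)) (hM : M.Chain' (C A B)) (hne : M ≠ [])
    (hseam : ∀ a ∈ M.getLast?, ∀ b ∈ M.head?, C A B a b) (n : ℕ) (hn : 1 ≤ n)
    (h1 : wp φ M ^ n = 1) : False := by
  have hch : ((List.replicate n M).flatten).Chain'
      (fun a b : ℤˣ × G => a.2 ∈ toSubgroup A B a.1 → a.1 = b.1) :=
    chain_join M hM hne hseam n
  let W : ReducedWord G A B := ⟨1, (List.replicate n M).flatten, hch⟩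
  have hprod : W.prod φ = 1 := by
    rw [rw_prod_eq]
    show of 1 * wp φ ((List.replicate n M).flatten) = 1
    rw [wp_flatten, h1]; simp
  have hnil := ReducedWord.toList_eq_nil_of_mem_of_range φ W
    (by rw [hprod]; exact ⟨1, map_one _⟩)
  obtain ⟨m, rfl⟩ : ∃ m, n = m + 1 := ⟨n - 1, (Nat.succ_pred_eq_of_pos hn).symm⟩
  rw [show W.toList = (List.replicate (m+1) M).flatten from rfl, List.replicate_succ,
    List.flatten_cons, List.append_eq_nil_iff] at hnil
  exact hne hnil.1

theorem eq_one_of_pow_eq_one (hG : ∀ g : G, ∀ m : ℕ, 1 ≤ m → g ^ m = 1 → g = 1)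
    (x : HNNExtension G A B φ) (n : ℕ) (hn : 1 ≤ n) (hx : x ^ n = 1) : x = 1 := by
  classical
  obtain ⟨d⟩ := TransversalPair.nonempty G A B
  set w : NormalWord d := x • (NormalWord.empty : NormalWord d) with hwdef
  have hw : of w.head * wp φ w.toList = x := by
    rw [← rw_prod_eq]
    show ReducedWord.prod φ (x • (NormalWord.empty : NormalWord d)).toReducedWord = x
    rw [NormalWord.prod_smul]
    simp [NormalWord.prod_empty]
  suffices H : ∀ k : ℕ, ∀ l : List (ℤˣ × G), l.length ≤ k → l.Chain' (C A B) →
      ∀ g : G, (of g * wp φ l) ^ n = 1 → of (A := A) (B := B) (φ := φ) g * wp φ l = 1 by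
    have := H w.toList.length w.toList le_rfl w.chain w.head (by rw [hw]; exact hx)
    rw [hw] at this; exact this
  intro k
  induction k with
  | zero =>
    intro l hl _ g hgl
    have hlnil : l = [] := List.eq_nil_of_length_eq_zero (Nat.le_zero.1 hl)
    subst hlnil
    rw [wp_nil, mul_one] at hgl ⊢
    rw [← map_pow] at hgl
    have h9 : g ^ n = 1 :=
      HNNExtension.of_injective (G := G) (A := A) (B := B) (φ := φ) (by rw [hgl, map_one])
    rw [hG g n hn h9, map_one]
  | succ k IH =>
    intro l hl hchain g hgl
    rcases List.eq_nil_or_concat l with rfl | ⟨l', p, rfl⟩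
    · rw [wp_nil, mul_one] at hgl ⊢
      rw [← map_pow] at hgl
      have h9 : g ^ n = 1 :=
        HNNExtension.of_injective (G := G) (A := A) (B := B) (φ := φ) (by rw [hgl, map_one])
      rw [hG g n hn h9, map_one]
    · rw [List.concat_eq_append] at hl hchain hgl ⊢
      set q : ℤˣ × G := (p.1, p.2 * g) with hq
      set M : List (ℤˣ × G) := l' ++ [q] with hM
      have hchainM : M.Chain' (C A B) := by
        rcases List.isChain_append.1 hchain with ⟨h1, _, h3⟩
        exact List.isChain_append.2 ⟨h1, List.isChain_singleton _,
          fun a ha b hb => by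
            simp only [List.head?_cons, Option.mem_some_iff] at hb
            subst hb
            exact h3 a ha p (by simp)⟩
      have hyM : wp φ M = wp φ (l' ++ [p]) * of g := by
        rw [hM, wp_concat, wp_concat, hq, map_mul]
        simp [mul_assoc]
      have hyn : (wp φ M) ^ n = 1 := by
        have heq : wp φ M = (of g)⁻¹ * (of g * wp φ (l' ++ [p])) * ((of g)⁻¹)⁻¹ := by
          rw [hyM]; group
        rw [heq, conj_pow, hgl]; group
      have hgoal : wp φ M = 1 → of (A := A) (B := B) (φ := φ) g * wp φ (l' ++ [p]) = 1 := by
        intro h1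
        have h2 : wp φ (l' ++ [p]) * of g = 1 := by rw [← hyM, h1]
        calc of (A := A) (B := B) (φ := φ) g * wp φ (l' ++ [p])
            = of g * (wp φ (l' ++ [p]) * of g) * (of g)⁻¹ := by group
          _ = 1 := by rw [h2]; group
      apply hgoal
      cases l' with
      | nil =>
        exfalso
        refine britton_contradiction φ M hchainM (by simp [hM]) ?_ n hn hyn
        intro a ha b hb
        rw [hM] at ha hb
        simp only [List.nil_append, List.getLast?_singleton, List.head?_cons,
          Option.mem_some_iff] at ha hb
        subst ha; subst hb
        intro _; rfl
      | cons q₀ l'' =>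
        by_cases hc : q.2 ∈ toSubgroup A B q.1 ∧ q.1 = -q₀.1
        · -- cancellation at the seam
          obtain ⟨hmem, hu⟩ := hc
          have hq₀ : q₀.1 = -q.1 := by rw [hu, neg_neg]
          set h' : G := ((toSubgroupEquiv φ q.1 ⟨q.2, hmem⟩ : toSubgroup A B (-q.1)) : G) * q₀.2
            with hh'
          have hz : wp φ M = ((t : HNNExtension G A B φ) ^ (q₀.1 : ℤ) * of q₀.2) *
              (wp φ l'' * of h') * ((t : HNNExtension G A B φ) ^ (q₀.1 : ℤ) * of q₀.2)⁻¹ := by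
            have e1 : wp φ M = (t : HNNExtension G A B φ) ^ (q₀.1 : ℤ) * of q₀.2 *
                wp φ (l'' ++ [q]) := by
              rw [hM, List.cons_append, wp_cons]
            have e2 : wp φ (l'' ++ [q]) * ((t : HNNExtension G A B φ) ^ (q₀.1 : ℤ) * of q₀.2)
                = wp φ l'' * of h' := by
              have hco : ((q₀.1 : ℤˣ) : ℤ) = -((q.1 : ℤˣ) : ℤ) := by
                rw [hq₀]; simp
              rw [wp_concat, hco, mul_assoc,
                seam_reduce φ q.1 q.2 q₀.2 hmem]
            rw [e1]
            rw [show wp φ l'' * of h' = wp φ (l'' ++ [q]) *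
              ((t : HNNExtension G A B φ) ^ (q₀.1 : ℤ) * of q₀.2) from e2.symm]
            group
          have hzn : (wp φ l'' * of h') ^ n = 1 := by
            have h4 := hyn
            rw [hz, conj_pow] at h4
            calc (wp φ l'' * of h') ^ n
                = ((t : HNNExtension G A B φ) ^ (q₀.1 : ℤ) * of q₀.2)⁻¹ *
                  ((t : HNNExtension G A B φ) ^ (q₀.1 : ℤ) * of q₀.2 * (wp φ l'' * of h') ^ n *
                    ((t : HNNExtension G A B φ) ^ (q₀.1 : ℤ) * of q₀.2)⁻¹) *
                  ((t : HNNExtension G A B φ) ^ (q₀.1 : ℤ) * of q₀.2) := by group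
              _ = 1 := by rw [h4]; group
          -- now conjugate to the standard shape and apply IH
          have hx'n : (of (A := A) (B := B) (φ := φ) h' * wp φ l'') ^ n = 1 := by
            have heq : of (A := A) (B := B) (φ := φ) h' * wp φ l''
                = of h' * (wp φ l'' * of h') * (of h')⁻¹ := by group
            rw [heq, conj_pow, hzn]; group
          have hlen : l''.length ≤ k := by
            have := hl
            simp only [List.cons_append, List.length_append, List.length_cons,
              List.length_nil] at this
            omega
          have hchain'' : l''.Chain' (C A B) := by
            have h7 := (List.isChain_cons.1
              (show (q₀ :: (l'' ++ [q])).Chain' (C A B) from hchainM)).2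
            exact (List.isChain_append.1 h7).1
          have := IH l'' hlen hchain'' h' hx'n
          -- deduce wp φ M = 1
          have hz1 : wp φ l'' * of h' = 1 := by
            calc wp φ l'' * of h'
                = (of h')⁻¹ * (of h' * wp φ l'') * of h' := by group
              _ = 1 := by rw [this]; group
          rw [hz, hz1]; group
        · -- no cancellation: Britton's lemma gives a contradiction
          exfalso
          refine britton_contradiction φ M hchainM (by simp [hM]) ?_ n hn hyn
          intro a ha b hb
          rw [hM] at ha hb
          rw [List.getLast?_concat] at ha
          simp only [List.cons_append, List.head?_cons, Option.mem_some_iff] at ha hb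
          subst ha; subst hb
          intro hmem
          refine units_eq_of_ne_neg (fun hne => hc ⟨hmem, hne⟩)

end HNNTorsion

namespace SurfaceAux

open HNNExtension

variable (m : ℕ)

abbrev ι := Fin (m+1) × Bool
abbrev a0 : ι m := ((0 : Fin (m+1)), false)
abbrev X := {x : ι m // x ≠ a0 m}
abbrev F := FreeGroup (X m)

def b1 : F m := FreeGroup.of ⟨((0 : Fin (m+1)), true), by simp [a0]⟩

def com (i : Fin (m+1)) (hi : i ≠ 0) : F m :=
  FreeGroup.of ⟨(i, false), by simp [a0, hi]⟩ * FreeGroup.of ⟨(i, true), by simp [a0]⟩ *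
    (FreeGroup.of ⟨(i, false), by simp [a0, hi]⟩)⁻¹ *
    (FreeGroup.of ⟨(i, true), by simp [a0]⟩)⁻¹

def cw : F m := (List.ofFn (fun i : Fin (m+1) =>
  if h : i = 0 then 1 else com m i h)).prod

def y0 : F m := (cw m)⁻¹ * b1 m

/-- The homomorphism sending every generator to `1 : ℤ`, used to show nontriviality. -/
def ψ : F m →* Multiplicative ℤ :=
  FreeGroup.lift (fun _ => Multiplicative.ofAdd (1 : ℤ))

lemma ψ_com (i : Fin (m+1)) (hi : i ≠ 0) : ψ m (com m i hi) = 1 := by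
  simp [com, ψ]

lemma ψ_cw : ψ m (cw m) = 1 := by
  rw [cw, map_list_prod, List.map_ofFn]
  apply List.prod_eq_one
  intro a ha
  rw [List.mem_ofFn] at ha
  obtain ⟨i, rfl⟩ := ha
  by_cases h : i = 0 <;> simp [h, ψ_com]

lemma ψ_b1 : ψ m (b1 m) = Multiplicative.ofAdd 1 := by simp [b1, ψ]

lemma ψ_y0 : ψ m (y0 m) = Multiplicative.ofAdd 1 := by
  rw [y0, map_mul, map_inv, ψ_cw, ψ_b1]; simp

lemma b1_ne_one : b1 m ≠ 1 := by
  intro h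
  have := congrArg (ψ m) h
  rw [ψ_b1, (ψ m).map_one] at this
  exact absurd this (by decide)

lemma y0_ne_one : y0 m ≠ 1 := by
  intro h
  have := congrArg (ψ m) h
  rw [ψ_y0, (ψ m).map_one] at this
  exact absurd this (by decide)

lemma not_isOfFinOrder {x : F m} (hx : x ≠ 1) : ¬ IsOfFinOrder x := by
  intro h
  obtain ⟨k, hk, hpow⟩ := isOfFinOrder_iff_pow_eq_one.1 h
  exact hx (freeGroup_eq_one_of_pow_eq_one x k hk hpow)

/-- The isomorphism `ℤ ≃ ⟨a⟩` for `a` nontrivial in the free group. -/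
def toZp (a : F m) : Multiplicative ℤ →* Subgroup.zpowers a where
  toFun := fun k => ⟨a ^ (Multiplicative.toAdd k), Subgroup.zpow_mem_zpowers _ _⟩
  map_one' := by ext; simp
  map_mul' := by intro j k; ext; simp [zpow_add]

lemma toZp_bijective (a : F m) (ha : a ≠ 1) : Function.Bijective (toZp m a) := by
  constructor
  · intro j k hjk
    have h1 : a ^ (Multiplicative.toAdd j) = a ^ (Multiplicative.toAdd k) :=
      congrArg Subtype.val hjk
    have h2 := injective_zpow_iff_not_isOfFinOrder.2 (not_isOfFinOrder m ha) h1
    exact Multiplicative.toAdd.injective h2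
  · rintro ⟨y, hy⟩
    obtain ⟨k, rfl⟩ := Subgroup.mem_zpowers_iff.1 hy
    exact ⟨Multiplicative.ofAdd k, rfl⟩

noncomputable def eqv (a : F m) (ha : a ≠ 1) : Multiplicative ℤ ≃* Subgroup.zpowers a :=
  MulEquiv.ofBijective (toZp m a) (toZp_bijective m a ha)

noncomputable def φm : Subgroup.zpowers (b1 m) ≃* Subgroup.zpowers (y0 m) :=
  (eqv m (b1 m) (b1_ne_one m)).symm.trans (eqv m (y0 m) (y0_ne_one m))

lemma φm_apply (k : ℤ) :
    ((φm m ⟨(b1 m) ^ k, Subgroup.zpow_mem_zpowers _ _⟩ : Subgroup.zpowers (y0 m)) : F m)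
      = (y0 m) ^ k := by
  have h1 : (⟨(b1 m) ^ k, Subgroup.zpow_mem_zpowers _ _⟩ : Subgroup.zpowers (b1 m))
      = eqv m (b1 m) (b1_ne_one m) (Multiplicative.ofAdd k) := rfl
  rw [φm, MulEquiv.trans_apply, h1, MulEquiv.symm_apply_apply]
  rfl


noncomputable section

abbrev HNNT := HNNExtension (F m) (Subgroup.zpowers (b1 m)) (Subgroup.zpowers (y0 m)) (φm m)

def fι : ι m → HNNT m := fun x => if h : x = a0 m then t else of (FreeGroup.of ⟨x, h⟩)

lemma key_conj : (t : HNNT m) * of (b1 m) * t⁻¹ = of (y0 m) := by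
  have h := equiv_eq_conj (φ := φm m) ⟨b1 m, Subgroup.mem_zpowers _⟩
  rw [← h]
  show of ((φm m ⟨b1 m, Subgroup.mem_zpowers _⟩ : Subgroup.zpowers (y0 m)) : F m) = of (y0 m)
  have h2 : (⟨b1 m, Subgroup.mem_zpowers _⟩ : Subgroup.zpowers (b1 m))
      = ⟨(b1 m) ^ (1 : ℤ), Subgroup.zpow_mem_zpowers _ _⟩ := by
    ext; simp
  rw [h2, φm_apply]; simp

lemma cw_eq : cw m = (List.ofFn fun i : Fin m => com m i.succ (Fin.succ_ne_zero i)).prod := by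
  rw [cw, List.ofFn_succ]
  simp [Fin.succ_ne_zero]

/-- The building blocks of the image of the relator in the HNN extension. -/
def TH (i : Fin (m+1)) : HNNT m :=
  fι m (i, false) * fι m (i, true) * (fι m (i, false))⁻¹ * (fι m (i, true))⁻¹

lemma TH_zero : TH m 0 = t * of (b1 m) * t⁻¹ * (of (b1 m))⁻¹ := by
  have h1 : fι m ((0 : Fin (m+1)), false) = t := by rw [fι, dif_pos rfl]
  have h2 : fι m ((0 : Fin (m+1)), true) = of (b1 m) := by
    rw [fι, dif_neg (by simp [a0])]; rfl
  rw [TH, h1, h2]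

lemma TH_succ (i : Fin m) : TH m i.succ = of (com m i.succ (Fin.succ_ne_zero i)) := by
  have h1 : fι m ((i.succ : Fin (m+1)), false)
      = of (FreeGroup.of ⟨(i.succ, false), by simp [a0, Fin.succ_ne_zero]⟩) := by
    rw [fι, dif_neg (by simp [a0, Fin.succ_ne_zero])]
  have h2 : fι m ((i.succ : Fin (m+1)), true)
      = of (FreeGroup.of ⟨(i.succ, true), by simp [a0]⟩) := by
    rw [fι, dif_neg (by simp [a0])]
  rw [TH, h1, h2, com, map_mul, map_mul, map_mul, map_inv, map_inv]

lemma lift_fι_rel : FreeGroup.lift (fι m) (surfaceRelator (m+1)) = 1 := by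
  have hterm : ∀ i : Fin (m+1), (FreeGroup.lift (fι m))
      (FreeGroup.of ((i : Fin (m+1)), false) * FreeGroup.of (i, true) *
        (FreeGroup.of (i, false))⁻¹ * (FreeGroup.of (i, true))⁻¹) = TH m i := by
    intro i
    rw [TH, map_mul, map_mul, map_mul, map_inv, map_inv, FreeGroup.lift_apply_of, FreeGroup.lift_apply_of]
  rw [surfaceRelator, map_list_prod, List.map_ofFn]
  rw [show (List.ofFn ((⇑(FreeGroup.lift (fι m))) ∘ fun i : Fin (m+1) =>
        FreeGroup.of (i, false) * FreeGroup.of (i, true) *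
          (FreeGroup.of (i, false))⁻¹ * (FreeGroup.of (i, true))⁻¹))
      = List.ofFn (TH m) from congrArg List.ofFn (funext hterm)]
  rw [List.ofFn_succ, List.prod_cons]
  have htail : (List.ofFn fun i : Fin m => TH m i.succ).prod = of (cw m) := by
    rw [show (List.ofFn fun i : Fin m => TH m i.succ)
        = List.ofFn (fun i : Fin m => of (com m i.succ (Fin.succ_ne_zero i)))
      from congrArg List.ofFn (funext fun i => TH_succ m i)]
    rw [cw_eq, map_list_prod, List.map_ofFn]
    rfl
  rw [htail, TH_zero, key_conj]
  rw [← map_inv, ← map_mul, ← map_mul]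
  rw [show y0 m * (b1 m)⁻¹ * cw m = 1 by rw [y0]; group, map_one]

def Φ : SurfaceGroup (m+1) →* HNNT m :=
  PresentedGroup.toGroup (f := fι m) (by
    rintro r hr
    rw [Set.mem_singleton_iff] at hr
    subst hr
    exact lift_fι_rel m)

def fS : F m →* SurfaceGroup (m+1) := FreeGroup.lift (fun x : X m => PresentedGroup.of x.1)

def AS (i : Fin (m+1)) : SurfaceGroup (m+1) := PresentedGroup.of (i, false)
def BS (i : Fin (m+1)) : SurfaceGroup (m+1) := PresentedGroup.of (i, true)

lemma fS_com (i : Fin (m+1)) (hi : i ≠ 0) :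
    fS m (com m i hi) = AS m i * BS m i * (AS m i)⁻¹ * (BS m i)⁻¹ := by
  rw [com, map_mul, map_mul, map_mul, map_inv, map_inv, fS, FreeGroup.lift_apply_of, FreeGroup.lift_apply_of]
  rfl

lemma fS_cw : fS m (cw m) = (List.ofFn fun i : Fin m =>
    AS m i.succ * BS m i.succ * (AS m i.succ)⁻¹ * (BS m i.succ)⁻¹).prod := by
  rw [cw_eq, map_list_prod, List.map_ofFn]
  exact congrArg List.prod (congrArg List.ofFn
    (funext fun i => fS_com m i.succ (Fin.succ_ne_zero i)))

lemma relS : AS m 0 * BS m 0 * (AS m 0)⁻¹ * (BS m 0)⁻¹ * fS m (cw m) = 1 := by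
  have h1 : (PresentedGroup.mk {surfaceRelator (m+1)})
      ((List.ofFn (fun i : Fin (m+1) =>
        FreeGroup.of ((i : Fin (m+1)), false) * FreeGroup.of (i, true) *
          (FreeGroup.of (i, false))⁻¹ * (FreeGroup.of (i, true))⁻¹)).prod) = 1 := by
    apply (QuotientGroup.eq_one_iff _).2
    exact Subgroup.subset_normalClosure (Set.mem_singleton_iff.2 rfl)
  have hterm : ∀ i : Fin (m+1), (PresentedGroup.mk {surfaceRelator (m+1)})
      (FreeGroup.of ((i : Fin (m+1)), false) * FreeGroup.of (i, true) *
        (FreeGroup.of (i, false))⁻¹ * (FreeGroup.of (i, true))⁻¹)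
      = AS m i * BS m i * (AS m i)⁻¹ * (BS m i)⁻¹ := by
    intro i
    rw [map_mul, map_mul, map_mul, map_inv, map_inv]
    rfl
  rw [map_list_prod, List.map_ofFn] at h1
  rw [show (List.ofFn ((⇑(PresentedGroup.mk {surfaceRelator (m+1)})) ∘ fun i : Fin (m+1) =>
        FreeGroup.of (i, false) * FreeGroup.of (i, true) *
          (FreeGroup.of (i, false))⁻¹ * (FreeGroup.of (i, true))⁻¹))
      = List.ofFn (fun i : Fin (m+1) => AS m i * BS m i * (AS m i)⁻¹ * (BS m i)⁻¹)
    from congrArg List.ofFn (funext hterm)] at h1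
  rw [List.ofFn_succ, List.prod_cons] at h1
  rw [fS_cw]
  exact h1

lemma fS_b1 : fS m (b1 m) = BS m 0 := by
  rw [fS, b1, FreeGroup.lift_apply_of]; rfl

lemma keyS : AS m 0 * fS m (b1 m) * (AS m 0)⁻¹ = fS m (y0 m) := by
  have h := relS m
  have hy : fS m (y0 m) = (fS m (cw m))⁻¹ * fS m (b1 m) := by
    rw [y0, map_mul, map_inv]
  rw [hy, fS_b1]
  calc AS m 0 * BS m 0 * (AS m 0)⁻¹
      = (AS m 0 * BS m 0 * (AS m 0)⁻¹ * (BS m 0)⁻¹ * fS m (cw m)) *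
        (fS m (cw m))⁻¹ * BS m 0 := by group
    _ = (fS m (cw m))⁻¹ * BS m 0 := by rw [h]; group

lemma hxS : ∀ a : Subgroup.zpowers (b1 m),
    PresentedGroup.of (a0 m) * fS m a = fS m ((φm m a : Subgroup.zpowers (y0 m)) : F m) *
      PresentedGroup.of (a0 m) := by
  rintro a
  obtain ⟨k, hk⟩ := Subgroup.mem_zpowers_iff.1 a.2
  have ha : a = ⟨(b1 m) ^ k, Subgroup.zpow_mem_zpowers _ _⟩ := Subtype.ext hk.symm
  subst ha
  rw [φm_apply]
  show PresentedGroup.of (a0 m) * fS m ((b1 m) ^ k) = fS m ((y0 m) ^ k) * PresentedGroup.of (a0 m)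
  rw [map_zpow, map_zpow]
  have hA : PresentedGroup.of (a0 m) = AS m 0 := rfl
  rw [hA, ← keyS, conj_zpow]
  group

def Ψ : HNNT m →* SurfaceGroup (m+1) :=
  HNNExtension.lift (fS m) (PresentedGroup.of (a0 m)) (hxS m)

lemma ΨΦ (γ : SurfaceGroup (m+1)) : Ψ m (Φ m γ) = γ := by
  have hcomp : (Ψ m).comp (Φ m) = MonoidHom.id _ := by
    apply PresentedGroup.ext
    intro x
    rw [MonoidHom.comp_apply, MonoidHom.id_apply]
    rw [show Φ m (PresentedGroup.of x) = fι m x from PresentedGroup.toGroup.of _]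
    by_cases hx : x = a0 m
    · subst hx
      rw [fι, dif_pos rfl]
      exact HNNExtension.lift_t _ _ _
    · rw [fι, dif_neg hx, Ψ, HNNExtension.lift_of, fS, FreeGroup.lift_apply_of]
  exact DFunLike.congr_fun hcomp γ

theorem aux (γ : SurfaceGroup (m+1)) (n : ℕ) (hn : 1 ≤ n) (h : γ ^ n = 1) : γ = 1 := by
  have h1 : (Φ m γ) ^ n = 1 := by rw [← map_pow, h, map_one]
  have h2 : Φ m γ = 1 := HNNTorsion.eq_one_of_pow_eq_one (φm m)
    (fun g k hk hg => freeGroup_eq_one_of_pow_eq_one g k hk hg) _ n hn h1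
  have h3 := ΨΦ m γ
  rw [h2, map_one] at h3
  exact h3.symm

end
end SurfaceAux


/-- For `g ≥ 1`, the genus-`g` surface group is torsion-free. -/
theorem surfaceGroup_torsionFree (g : ℕ) (hg : 1 ≤ g)
    (γ : SurfaceGroup g) (n : ℕ) (hn : 1 ≤ n) (h : γ ^ n = 1) : γ = 1 := by
  obtain ⟨m, rfl⟩ : ∃ m, g = m + 1 := ⟨g - 1, (Nat.succ_pred_eq_of_pos hg).symm⟩
  exact SurfaceAux.aux m γ n hn h
end
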